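/- arXiv:2104.05687 — 5 statements merged into one kernel-verified Lean document; each statement's English description precedes it below -/
import Mathlib

section
/- Suppose A = Q ∘ R, where R is an invertible n×n complex matrix and Q : ℂⁿ → H is a continuous linear map with Q*Q = Iₙ (a reduced QR factorization of A). Then the matrix R + λ(R*)⁻¹ is invertible and the unique minimizer of F is x* = (R + λ(R*)⁻¹)⁻¹ Q* b. -/
open ContinuousLinearMap

local notation "⟪" x ", " y "⟫" => @inner ℂ _ _ x y

/-- Completion of the square: if `x` satisfies the normal equations, then the SILR
objective at any `y` exceeds the one at `x` by `‖A(y-x)‖² + λ‖y-x‖²`. -/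
private lemma silr_key {n : ℕ} {H : Type*} [NormedAddCommGroup H] [InnerProductSpace ℂ H]
    [CompleteSpace H]
    (A : EuclideanSpace ℂ (Fin n) →L[ℂ] H) (b : H) (lam : ℝ)
    (x y : EuclideanSpace ℂ (Fin n))
    (hx : adjoint A (A x - b) + (lam : ℂ) • x = 0) :
    ‖A y - b‖ ^ 2 + lam * ‖y‖ ^ 2
      = ‖A x - b‖ ^ 2 + lam * ‖x‖ ^ 2 + (‖A (y - x)‖ ^ 2 + lam * ‖y - x‖ ^ 2) := by
  set u := y - x with hu
  have h1 : A y - b = (A x - b) + A u := by rw [hu, map_sub]; abel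
  have h2 : y = x + u := by rw [hu]; abel
  have hz : ⟪A x - b, A u⟫ + (lam : ℂ) * ⟪x, u⟫ = 0 := by
    calc ⟪A x - b, A u⟫ + (lam : ℂ) * ⟪x, u⟫
        = ⟪adjoint A (A x - b), u⟫ + ⟪(lam : ℂ) • x, u⟫ := by
          rw [adjoint_inner_left, inner_smul_left, Complex.conj_ofReal]
      _ = ⟪adjoint A (A x - b) + (lam : ℂ) • x, u⟫ := (inner_add_left _ _ _).symm
      _ = 0 := by rw [hx, inner_zero_left]
  have hcross : (⟪A x - b, A u⟫).re + lam * (⟪x, u⟫).re = 0 := by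
    have h3 := congrArg Complex.re hz
    simp only [Complex.add_re, Complex.re_ofReal_mul, Complex.zero_re] at h3
    exact h3
  rw [h1, norm_add_sq (𝕜 := ℂ), h2, norm_add_sq (𝕜 := ℂ)]
  simp only [RCLike.re_to_complex]
  linear_combination (2 : ℝ) * hcross

set_option maxHeartbeats 1000000 in
/-- **Solving overdetermined SILR via a reduced QR factorization.**
Let `H` be a complex Hilbert space, `b ∈ H`, `λ ≥ 0`.  Suppose the tall
quasimatrix is `A = Q ∘ R` with `R` an invertible `n × n` complex matrix and
`Q : ℂⁿ → H` a continuous linear map with `Q*Q = Iₙ`, and assume `λ > 0` or `A`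
is injective.  Then the matrix `R + λ (R*)⁻¹` is invertible and
`x* = (R + λ(R*)⁻¹)⁻¹ Q* b` is the unique minimizer of the SILR objective
`F(x) = ‖Ax − b‖² + λ‖x‖²`. -/
theorem overdetermined_silr_qr
    {n : ℕ} {H : Type*} [NormedAddCommGroup H] [InnerProductSpace ℂ H]
    [CompleteSpace H]
    (Q : EuclideanSpace ℂ (Fin n) →L[ℂ] H) (R : Matrix (Fin n) (Fin n) ℂ)
    (A : EuclideanSpace ℂ (Fin n) →L[ℂ] H) (b : H) (lam : ℝ) (hlam : 0 ≤ lam)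
    (hA : A = Q ∘L (Matrix.toEuclideanCLM (𝕜 := ℂ) R))
    (hQ : adjoint Q ∘L Q = 1)
    (hR : IsUnit R)
    (hreg : 0 < lam ∨ Function.Injective A) :
    IsUnit (R + (lam : ℂ) • (R.conjTranspose)⁻¹) ∧
    (∀ y : EuclideanSpace ℂ (Fin n),
        ‖A ((Matrix.toEuclideanCLM (𝕜 := ℂ)
              (R + (lam : ℂ) • (R.conjTranspose)⁻¹)⁻¹) (adjoint Q b)) - b‖ ^ 2
          + lam * ‖(Matrix.toEuclideanCLM (𝕜 := ℂ)
              (R + (lam : ℂ) • (R.conjTranspose)⁻¹)⁻¹) (adjoint Q b)‖ ^ 2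
        ≤ ‖A y - b‖ ^ 2 + lam * ‖y‖ ^ 2) ∧
    (∀ x : EuclideanSpace ℂ (Fin n),
        (∀ y : EuclideanSpace ℂ (Fin n),
            ‖A x - b‖ ^ 2 + lam * ‖x‖ ^ 2 ≤ ‖A y - b‖ ^ 2 + lam * ‖y‖ ^ 2) →
        x = (Matrix.toEuclideanCLM (𝕜 := ℂ)
              (R + (lam : ℂ) • (R.conjTranspose)⁻¹)⁻¹) (adjoint Q b)) := by
  classical
  set e : Matrix (Fin n) (Fin n) ℂ ≃⋆ₐ[ℂ]
      (EuclideanSpace ℂ (Fin n) →L[ℂ] EuclideanSpace ℂ (Fin n)) :=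
    Matrix.toEuclideanCLM (𝕜 := ℂ) with he
  set S : Matrix (Fin n) (Fin n) ℂ := R + (lam : ℂ) • (R.conjTranspose)⁻¹ with hS
  set T : Matrix (Fin n) (Fin n) ℂ := R.conjTranspose * R + (lam : ℂ) • 1 with hT
  -- basic unit facts
  have hRstar : IsUnit R.conjTranspose := by
    rw [← Matrix.star_eq_conjTranspose]; exact hR.star
  have hfactor : R.conjTranspose * S = T := by
    rw [hS, Matrix.mul_add, Matrix.mul_smul,
      Matrix.mul_nonsing_inv _ ((Matrix.isUnit_iff_isUnit_det _).mp hRstar), hT]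
  -- `e R` is injective
  have heR : IsUnit (e R) := hR.map e
  have heRinj : Function.Injective (e R) := by
    obtain ⟨u, hu⟩ := heR
    have hinv : ∀ z : EuclideanSpace ℂ (Fin n),
        (↑u⁻¹ : _ →L[ℂ] _) (e R z) = z := by
      intro z
      rw [← hu, ← ContinuousLinearMap.mul_apply, u.inv_mul, ContinuousLinearMap.one_apply]
    intro a b hab
    rw [← hinv a, ← hinv b, hab]
  -- adjoint of `e R`
  have headj : adjoint (e R) = e R.conjTranspose := by
    rw [← star_eq_adjoint, ← map_star, Matrix.star_eq_conjTranspose]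
  -- the key quadratic-form identity for `e T`
  have heT : ∀ z : EuclideanSpace ℂ (Fin n),
      e T z = e R.conjTranspose (e R z) + (lam : ℂ) • z := by
    intro z
    rw [hT, map_add, map_mul, map_smul, map_one]
    rfl
  -- `e T` is injective
  have heTinj : Function.Injective (e T) := by
    intro a b hab
    have hd : e T (a - b) = 0 := by rw [map_sub, hab, sub_self]
    set d := a - b with hdd
    have hre : ‖e R d‖ ^ 2 + lam * ‖d‖ ^ 2 = 0 := by
      have h0 : ⟪d, e T d⟫ = ⟪e R d, e R d⟫ + (lam : ℂ) * ⟪d, d⟫ := by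
        rw [heT, inner_add_right, inner_smul_right, ← headj, adjoint_inner_right]
      rw [hd, inner_zero_right] at h0
      have h1 := congrArg Complex.re h0.symm
      simp only [Complex.add_re, Complex.re_ofReal_mul, Complex.zero_re] at h1
      simp only [← RCLike.re_to_complex, inner_self_eq_norm_sq] at h1
      exact h1
    have hnn1 : (0 : ℝ) ≤ ‖e R d‖ ^ 2 := sq_nonneg _
    have hnn2 : (0 : ℝ) ≤ lam * ‖d‖ ^ 2 := mul_nonneg hlam (sq_nonneg _)
    have h1 : ‖e R d‖ ^ 2 = 0 := by linarith
    have h2 : e R d = 0 := by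
      simpa using (pow_eq_zero_iff (two_ne_zero)).mp h1
    have hd0 : d = 0 := heRinj (by simpa using h2)
    exact sub_eq_zero.mp hd0
  -- `T` is a unit, hence `S` is a unit
  have hTunit : IsUnit T := by
    rw [← Matrix.mulVec_injective_iff_isUnit]
    intro v w hvw
    have h1 : e T ((WithLp.equiv 2 _).symm v) = e T ((WithLp.equiv 2 _).symm w) := by
      show e T (WithLp.toLp 2 v) = e T (WithLp.toLp 2 w)
      rw [he, Matrix.toEuclideanCLM_toLp, Matrix.toEuclideanCLM_toLp]
      exact congrArg _ hvw
    have h2 := heTinj h1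
    simpa using congrArg (WithLp.equiv 2 _) h2
  have hSunit : IsUnit S := by
    have := hRstar.unit.isUnit
    have h := hTunit
    rw [← hfactor] at h
    -- IsUnit (Rᴴ * S) with Rᴴ a unit implies S a unit
    have : S = (R.conjTranspose)⁻¹ * (R.conjTranspose * S) := by
      rw [← Matrix.mul_assoc,
        Matrix.nonsing_inv_mul _ ((Matrix.isUnit_iff_isUnit_det _).mp hRstar), Matrix.one_mul]
    rw [this]
    exact (Matrix.isUnit_nonsing_inv_iff.mpr hRstar).mul h
  -- the candidate minimizer
  set w : EuclideanSpace ℂ (Fin n) := adjoint Q b with hw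
  set xs : EuclideanSpace ℂ (Fin n) := e S⁻¹ w with hxs
  -- normal equations
  have hTS : T * S⁻¹ = R.conjTranspose := by
    rw [← hfactor, Matrix.mul_assoc,
      Matrix.mul_nonsing_inv _ ((Matrix.isUnit_iff_isUnit_det _).mp hSunit), Matrix.mul_one]
  have hQQ : ∀ z, adjoint Q (Q z) = z := by
    intro z
    have := congrArg (fun f : EuclideanSpace ℂ (Fin n) →L[ℂ] _ => f z) hQ
    simpa using this
  have hnormal : adjoint A (A xs - b) + (lam : ℂ) • xs = 0 := by
    have hAadj : adjoint A = e R.conjTranspose ∘L adjoint Q := by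
      rw [hA, adjoint_comp, headj]
    have hAx : adjoint A (A xs) + (lam : ℂ) • xs = e R.conjTranspose w := by
      have e1 : adjoint A (A xs) = e R.conjTranspose (e R xs) := by
        rw [hAadj, hA]
        simp only [coe_comp', Function.comp_apply]
        rw [hQQ]
      rw [e1, ← heT, hxs]
      have h2 : e T (e S⁻¹ w) = e (T * S⁻¹) w := by
        rw [map_mul, ContinuousLinearMap.mul_apply]
      rw [h2, hTS]
    have hAb : adjoint A b = e R.conjTranspose w := by
      rw [hAadj, ContinuousLinearMap.comp_apply]
    rw [map_sub, hAb, ← hAx]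
    abel
  refine ⟨hSunit, ?_, ?_⟩
  · intro y
    have := silr_key A b lam xs y hnormal
    have hnn : (0 : ℝ) ≤ ‖A (y - xs)‖ ^ 2 + lam * ‖y - xs‖ ^ 2 :=
      add_nonneg (sq_nonneg _) (mul_nonneg hlam (sq_nonneg _))
    linarith [this]
  · intro x hmin
    have hkey := silr_key A b lam xs x hnormal
    have hle := hmin xs
    have hnn1 : (0 : ℝ) ≤ ‖A (x - xs)‖ ^ 2 := sq_nonneg _
    have hnn2 : (0 : ℝ) ≤ lam * ‖x - xs‖ ^ 2 := mul_nonneg hlam (sq_nonneg _)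
    have hzero : ‖A (x - xs)‖ ^ 2 + lam * ‖x - xs‖ ^ 2 = 0 := by linarith
    have hsub : x - xs = 0 := by
      rcases hreg with hpos | hinj
      · have : ‖x - xs‖ ^ 2 = 0 := by nlinarith
        simpa using (pow_eq_zero_iff (two_ne_zero)).mp this
      · have hA0 : ‖A (x - xs)‖ ^ 2 = 0 := by linarith
        have : A (x - xs) = 0 := by
          simpa using (pow_eq_zero_iff (two_ne_zero)).mp hA0
        have : A (x - xs) = A 0 := by simpa using this
        exact hinj this
    exact sub_eq_zero.mp hsub
end

section
/- Suppose A = Q_A ∘ R_A with Q_A : ℂⁿ → H satisfying Q_A*Q_A = Iₙ and R_A an n×n matrix, and suppose the 2n×n matrix C = [R_A; √λ Iₙ] factors as C = Q_C R_C with Q_C a 2n×n matrix satisfying Q_C*Q_C = Iₙ and R_C an n×n invertible matrix; write Q_{C,1} for the top n rows of Q_C and Q_{C,2} for the bottom n rows. Then: (i) (Q_A Q_{C,1})*(Q_A Q_{C,1}) + Q_{C,2}*Q_{C,2} = Iₙ, so that x ↦ (Q_A Q_{C,1} x, Q_{C,2} x) is an isometry from ℂⁿ into H × ℂⁿ; and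 (ii) the unique minimizer x* of F satisfies the triangular system R_C x* = Q_{C,1}* Q_A* b. -/
open ContinuousLinearMap

open scoped InnerProductSpace

private lemma aux_inner_isometry {E F : Type*} [NormedAddCommGroup E] [InnerProductSpace ℂ E]
    [NormedAddCommGroup F] [InnerProductSpace ℂ F] [CompleteSpace E] [CompleteSpace F]
    (T : E →L[ℂ] F) (hT : ContinuousLinearMap.adjoint T ∘L T = 1) (w w' : E) :
    ⟪T w, T w'⟫_ℂ = ⟪w, w'⟫_ℂ := by
  rw [← ContinuousLinearMap.adjoint_inner_right]
  congr 1
  calc ContinuousLinearMap.adjoint T (T w') = (ContinuousLinearMap.adjoint T ∘L T) w' := rfl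
    _ = w' := by rw [hT]; rfl

private lemma aux_norm_isometry {E F : Type*} [NormedAddCommGroup E] [InnerProductSpace ℂ E]
    [NormedAddCommGroup F] [InnerProductSpace ℂ F] [CompleteSpace E] [CompleteSpace F]
    (T : E →L[ℂ] F) (hT : ContinuousLinearMap.adjoint T ∘L T = 1) (w : E) :
    ‖T w‖ = ‖w‖ := by
  rw [norm_eq_sqrt_re_inner (𝕜 := ℂ), norm_eq_sqrt_re_inner (𝕜 := ℂ) w,
    aux_inner_isometry T hT w w]

set_option maxHeartbeats 1000000 in
/-- **Ridge-regularized SILR via an augmented QR factorization.**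
Let `H` be a complex Hilbert space, `b ∈ H`, `λ > 0`.  Suppose `A = Q_A ∘ R_A`
with `Q_A : ℂⁿ → H` satisfying `Q_A*Q_A = Iₙ` and `R_A` an `n × n` matrix, and
suppose the `2n × n` matrix `C = [R_A; √λ Iₙ]` factors as `C = Q_C R_C` with
`Q_C* Q_C = Iₙ` and `R_C` invertible; `Q_{C,1}` and `Q_{C,2}` denote the top
and bottom `n` rows of `Q_C`.  Then
(i) `(Q_A Q_{C,1})*(Q_A Q_{C,1}) + Q_{C,2}*Q_{C,2} = Iₙ`, so that
`x ↦ (Q_A Q_{C,1} x, Q_{C,2} x)` is an isometry of `ℂⁿ` into `H × ℂⁿ`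
(`‖Q_A(Q_{C,1}x)‖² + ‖Q_{C,2}x‖² = ‖x‖²`); and
(ii) the minimizer `x*` of `F(x) = ‖Ax − b‖² + λ‖x‖²` satisfies the triangular
system `R_C x* = Q_{C,1}* Q_A* b`. -/
theorem overdetermined_silr_augmented_qr
    {n : ℕ} {H : Type*} [NormedAddCommGroup H] [InnerProductSpace ℂ H]
    [CompleteSpace H]
    (QA : EuclideanSpace ℂ (Fin n) →L[ℂ] H) (RA : Matrix (Fin n) (Fin n) ℂ)
    (QC : Matrix (Fin n ⊕ Fin n) (Fin n) ℂ) (RC : Matrix (Fin n) (Fin n) ℂ)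
    (A : EuclideanSpace ℂ (Fin n) →L[ℂ] H) (b : H) (lam : ℝ) (hlam : 0 < lam)
    (hA : A = QA ∘L (Matrix.toEuclideanCLM (𝕜 := ℂ) RA))
    (hQA : adjoint QA ∘L QA = 1)
    (hC : Matrix.fromRows RA
        (((Real.sqrt lam : ℂ)) • (1 : Matrix (Fin n) (Fin n) ℂ)) = QC * RC)
    (hQC : QC.conjTranspose * QC = 1)
    (hRC : IsUnit RC) :
    ((QC.submatrix Sum.inl id).conjTranspose * (QC.submatrix Sum.inl id) +
        (QC.submatrix Sum.inr id).conjTranspose * (QC.submatrix Sum.inr id) = 1) ∧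
    (∀ x : EuclideanSpace ℂ (Fin n),
        ‖QA ((Matrix.toEuclideanCLM (𝕜 := ℂ) (QC.submatrix Sum.inl id)) x)‖ ^ 2
          + ‖(Matrix.toEuclideanCLM (𝕜 := ℂ) (QC.submatrix Sum.inr id)) x‖ ^ 2
          = ‖x‖ ^ 2) ∧
    (∀ xstar : EuclideanSpace ℂ (Fin n),
        (∀ y : EuclideanSpace ℂ (Fin n),
            ‖A xstar - b‖ ^ 2 + lam * ‖xstar‖ ^ 2
              ≤ ‖A y - b‖ ^ 2 + lam * ‖y‖ ^ 2) →
        (Matrix.toEuclideanCLM (𝕜 := ℂ) RC) xstar =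
          (Matrix.toEuclideanCLM (𝕜 := ℂ)
            (QC.submatrix Sum.inl id).conjTranspose) (adjoint QA b)) := by
  classical
  set Q1 : Matrix (Fin n) (Fin n) ℂ := QC.submatrix Sum.inl id with hQ1def
  set Q2 : Matrix (Fin n) (Fin n) ℂ := QC.submatrix Sum.inr id with hQ2def
  set M : Matrix (Fin n) (Fin n) ℂ ≃⋆ₐ[ℂ]
      (EuclideanSpace ℂ (Fin n) →L[ℂ] EuclideanSpace ℂ (Fin n)) :=
    Matrix.toEuclideanCLM (𝕜 := ℂ) with hMdef
  -- block identity (i)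
  have hblock : Q1.conjTranspose * Q1 + Q2.conjTranspose * Q2 = 1 := by
    ext i j
    have h := congrFun (congrFun hQC i) j
    simp only [Matrix.mul_apply, Matrix.conjTranspose_apply, Fintype.sum_sum_type] at h
    simpa [Matrix.mul_apply, Matrix.conjTranspose_apply, Matrix.add_apply, Q1, Q2,
      Matrix.submatrix_apply] using h
  -- adjoint of matrix CLM
  have hadj : ∀ X : Matrix (Fin n) (Fin n) ℂ, adjoint (M X) = M X.conjTranspose := by
    intro X
    rw [← ContinuousLinearMap.star_eq_adjoint, ← map_star, Matrix.star_eq_conjTranspose]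
  refine ⟨hblock, ?_, ?_⟩
  · -- isometry property
    intro x
    have h1 : ‖QA (M Q1 x)‖ = ‖M Q1 x‖ := aux_norm_isometry QA hQA _
    have hinner : (⟪M Q1 x, M Q1 x⟫_ℂ) + ⟪M Q2 x, M Q2 x⟫_ℂ = ⟪x, x⟫_ℂ := by
      rw [← ContinuousLinearMap.adjoint_inner_right (M Q1),
        ← ContinuousLinearMap.adjoint_inner_right (M Q2), hadj, hadj, ← inner_add_right]
      have h2 : M Q1.conjTranspose (M Q1 x) + M Q2.conjTranspose (M Q2 x)
          = M (Q1.conjTranspose * Q1 + Q2.conjTranspose * Q2) x := by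
        rw [map_add, map_mul, map_mul]; rfl
      rw [h2, hblock, map_one]
      rfl
    have hin2 : ((‖M Q1 x‖ : ℂ) ^ 2) + (‖M Q2 x‖ : ℂ) ^ 2 = (‖x‖ : ℂ) ^ 2 := by
      simpa [inner_self_eq_norm_sq_to_K] using hinner
    rw [h1]
    exact_mod_cast hin2
  · -- minimizer
    intro xstar hmin
    -- top-block of the QR factorization
    have hQ1RC : Q1 * RC = RA := by
      ext i j
      have h := congrFun (congrFun hC (Sum.inl i)) j
      simp only [Matrix.fromRows, Matrix.of_apply, Matrix.mul_apply] at h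
      rw [Matrix.mul_apply]; exact h.symm
    -- key Gram identity
    have hkey : RC.conjTranspose * RC
        = RA.conjTranspose * RA + ((lam : ℂ)) • (1 : Matrix (Fin n) (Fin n) ℂ) := by
      have h1 : RC.conjTranspose * RC
          = (QC * RC).conjTranspose * (QC * RC) := by
        rw [Matrix.conjTranspose_mul, Matrix.mul_assoc, ← Matrix.mul_assoc QC.conjTranspose,
          hQC, Matrix.one_mul]
      rw [h1, ← hC, Matrix.conjTranspose_fromRows_eq_fromCols_conjTranspose,
        Matrix.fromCols_mul_fromRows]
      congr 1
      rw [Matrix.conjTranspose_smul, Matrix.conjTranspose_one,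
        Matrix.smul_mul, Matrix.mul_smul, Matrix.one_mul, smul_smul]
      congr 1
      rw [RCLike.star_def, Complex.conj_ofReal]
      norm_cast
      exact Real.mul_self_sqrt hlam.le
    -- the vector v
    set v : EuclideanSpace ℂ (Fin n) := M Q1.conjTranspose (adjoint QA b) with hvdef
    have K1 : ∀ z : EuclideanSpace ℂ (Fin n),
        (⟪M RC z, M RC z⟫_ℂ) = ⟪A z, A z⟫_ℂ + (lam : ℂ) * ⟪z, z⟫_ℂ := by
      intro z
      have e1 : (⟪M RC z, M RC z⟫_ℂ) = ⟪z, M RC.conjTranspose (M RC z)⟫_ℂ := by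
        rw [← hadj, ContinuousLinearMap.adjoint_inner_right]
      have e2 : M RC.conjTranspose (M RC z)
          = M RA.conjTranspose (M RA z) + (lam : ℂ) • z := by
        calc M RC.conjTranspose (M RC z) = (M (RC.conjTranspose * RC)) z := by
              rw [map_mul]; rfl
          _ = (M (RA.conjTranspose * RA) + (lam : ℂ) • M 1) z := by
              rw [hkey, map_add, map_smul]
          _ = M RA.conjTranspose (M RA z) + (lam : ℂ) • z := by
              rw [map_mul, map_one]; rfl
      have e3 : (⟪z, M RA.conjTranspose (M RA z)⟫_ℂ) = ⟪A z, A z⟫_ℂ := by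
        rw [← hadj, ContinuousLinearMap.adjoint_inner_right, hA]
        exact (aux_inner_isometry QA hQA _ _).symm
      rw [e1, e2, inner_add_right, inner_smul_right, e3]
    have K2 : ∀ z : EuclideanSpace ℂ (Fin n), (⟪M RC z, v⟫_ℂ) = ⟪A z, b⟫_ℂ := by
      intro z
      have e1 : (⟪M RC z, v⟫_ℂ) = ⟪z, M RC.conjTranspose v⟫_ℂ := by
        rw [← hadj, ContinuousLinearMap.adjoint_inner_right]
      have e2 : M RC.conjTranspose v = M RA.conjTranspose (adjoint QA b) := by
        rw [hvdef]
        calc M RC.conjTranspose (M Q1.conjTranspose (adjoint QA b))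
            = M (RC.conjTranspose * Q1.conjTranspose) (adjoint QA b) := by
              rw [map_mul]; rfl
          _ = M RA.conjTranspose (adjoint QA b) := by
              rw [← Matrix.conjTranspose_mul, hQ1RC]
      rw [e1, e2, ← hadj, ContinuousLinearMap.adjoint_inner_right,
        ContinuousLinearMap.adjoint_inner_right, hA]
      rfl
    have NRC : ∀ x : EuclideanSpace ℂ (Fin n),
        ‖M RC x‖ ^ 2 = ‖A x‖ ^ 2 + lam * ‖x‖ ^ 2 := by
      intro x
      have h := K1 x
      rw [inner_self_eq_norm_sq_to_K, inner_self_eq_norm_sq_to_K,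
        inner_self_eq_norm_sq_to_K] at h
      have h2 := congrArg Complex.re h
      simpa [← Complex.ofReal_pow] using h2
    have N1 : ∀ x : EuclideanSpace ℂ (Fin n),
        ‖A x - b‖ ^ 2 + lam * ‖x‖ ^ 2
          = ‖M RC x - v‖ ^ 2 + (‖b‖ ^ 2 - ‖v‖ ^ 2) := by
      intro x
      rw [norm_sub_sq (𝕜 := ℂ), norm_sub_sq (𝕜 := ℂ), NRC x, K2 x]
      ring
    obtain ⟨u, hu⟩ := hRC
    set x0 : EuclideanSpace ℂ (Fin n) := M (↑u⁻¹) v with hx0def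
    have hx0 : M RC x0 = v := by
      rw [hx0def]
      calc M RC (M (↑u⁻¹) v) = M (RC * ↑u⁻¹) v := by rw [map_mul]; rfl
        _ = M 1 v := by rw [← hu, Units.mul_inv]
        _ = v := by rw [map_one]; rfl
    have hle := hmin x0
    rw [N1 xstar, N1 x0, hx0, sub_self, norm_zero] at hle
    have hsq : ‖M RC xstar - v‖ ^ 2 ≤ 0 := by
      have : (0 : ℝ) ^ 2 = 0 := by norm_num
      linarith [hle]
    have h0 : M RC xstar - v = 0 := by
      have := sq_nonneg ‖M RC xstar - v‖
      have hn : ‖M RC xstar - v‖ ^ 2 = 0 := le_antisymm hsq this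
      have := pow_eq_zero_iff (n := 2) (by norm_num) |>.mp hn
      exact norm_eq_zero.mp this
    have := sub_eq_zero.mp h0
    rw [this]
end

section
/- Let f(y) = (1/2)⟨y, (K + λIₙ)y⟩ − Re⟨y, b⟩ for y ∈ ℂⁿ, let y* = (K + λIₙ)⁻¹b be its minimizer, and let x* = A*y*. If ỹ ∈ ℂⁿ satisfies f(ỹ) ≤ f(y*) + ε for some ε ≥ 0, then the vector x̃ = A*ỹ satisfies ‖x̃ − x*‖_H² ≤ (2 λ_max(K) / (λ_min(K) + λ)) · ε, where λ_max(K) and λ_min(K) are the largest and smallest eigenvalues of K. -/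
open ContinuousLinearMap

set_option maxHeartbeats 1000000 in
/-- **Approximate solutions of underdetermined SILR via the dual quadratic.**
Let `H` be a complex Hilbert space, `A : H → ℂⁿ` a continuous linear map (a
wide quasimatrix), `b ∈ ℂⁿ`, `λ ≥ 0`, and `K = A A*`.  Let `λmin` and `λmax` be
the smallest and largest eigenvalues of the positive semidefinite Hermitian
matrix `K`, characterized as the greatest lower and least upper bounds of the
quadratic form `y ↦ Re⟨y, Ky⟩` relative to `‖y‖²`, and assume `λmin + λ > 0`.
Let `f(y) = (1/2)⟨y, (K+λI)y⟩ − Re⟨y, b⟩`, let `y* = (K+λI)⁻¹ b` (the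
minimizer of `f`, defined by `(K+λI)y* = b`), and `x* = A* y*`.  If `ỹ`
satisfies `f(ỹ) ≤ f(y*) + ε` with `ε ≥ 0`, then `x̃ = A* ỹ` satisfies
`‖x̃ − x*‖² ≤ (2 λmax / (λmin + λ)) ε`. -/
theorem underdetermined_silr_suboptimality
    {n : ℕ} (hn : 0 < n) {H : Type*} [NormedAddCommGroup H]
    [InnerProductSpace ℂ H] [CompleteSpace H]
    (A : H →L[ℂ] EuclideanSpace ℂ (Fin n)) (b : EuclideanSpace ℂ (Fin n))
    (lam lamMin lamMax : ℝ) (hlam : 0 ≤ lam)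
    (hmin : IsGreatest {c : ℝ | ∀ y : EuclideanSpace ℂ (Fin n),
        c * ‖y‖ ^ 2 ≤ (inner (𝕜 := ℂ) y ((A ∘L adjoint A) y)).re} lamMin)
    (hmax : IsLeast {c : ℝ | ∀ y : EuclideanSpace ℂ (Fin n),
        (inner (𝕜 := ℂ) y ((A ∘L adjoint A) y)).re ≤ c * ‖y‖ ^ 2} lamMax)
    (hpos : 0 < lamMin + lam)
    (f : EuclideanSpace ℂ (Fin n) → ℝ)
    (hf : ∀ y : EuclideanSpace ℂ (Fin n),
        f y = (1 / 2) * (inner (𝕜 := ℂ) y ((A ∘L adjoint A) y + (lam : ℂ) • y)).re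
          - (inner (𝕜 := ℂ) y b).re)
    (ystar : EuclideanSpace ℂ (Fin n))
    (hystar : (A ∘L adjoint A) ystar + (lam : ℂ) • ystar = b)
    (ytil : EuclideanSpace ℂ (Fin n)) (ε : ℝ) (hε : 0 ≤ ε)
    (happrox : f ytil ≤ f ystar + ε) :
    ‖adjoint A ytil - adjoint A ystar‖ ^ 2 ≤ (2 * lamMax / (lamMin + lam)) * ε := by
  set K := A ∘L adjoint A with hKdef
  set d : EuclideanSpace ℂ (Fin n) := ytil - ystar with hddef
  -- symmetry of the quadratic form
  have hsym : ∀ x y : EuclideanSpace ℂ (Fin n),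
      (inner (𝕜 := ℂ) x (K y)).re = (inner (𝕜 := ℂ) y (K x)).re := by
    intro x y
    rw [hKdef, comp_apply, comp_apply, ← adjoint_inner_left, ← adjoint_inner_left,
      ← inner_conj_symm]
    simp
    exact inner_re_symm (𝕜 := ℂ) _ _
  -- positivity of quadratic form equals norm of adjoint
  have hquad : ∀ y : EuclideanSpace ℂ (Fin n),
      (inner (𝕜 := ℂ) y (K y)).re = ‖adjoint A y‖ ^ 2 := by
    intro y
    rw [hKdef, comp_apply, ← adjoint_inner_left]
    simpa using inner_self_eq_norm_sq (𝕜 := ℂ) (adjoint A y)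
  have hnormd : ∀ y : EuclideanSpace ℂ (Fin n),
      (inner (𝕜 := ℂ) y y).re = ‖y‖ ^ 2 := by
    intro y; simpa using inner_self_eq_norm_sq (𝕜 := ℂ) y
  -- key expansion
  have hd : ytil = ystar + d := by rw [hddef]; abel
  have expand : f ytil - f ystar
      = (1 / 2) * ((inner (𝕜 := ℂ) d (K d)).re + lam * ‖d‖ ^ 2) := by
    rw [hf, hf, hd, ← hystar]
    simp only [map_add, smul_add, inner_add_left, inner_add_right, inner_smul_right,
      Complex.add_re, Complex.mul_re, Complex.ofReal_re, Complex.ofReal_im, zero_mul,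
      sub_zero]
    have h1 := hsym ystar d
    have h2 : (inner (𝕜 := ℂ) ystar d : ℂ).re = (inner (𝕜 := ℂ) d ystar : ℂ).re := by
      rw [← inner_conj_symm]; simp
      exact inner_re_symm (𝕜 := ℂ) _ _
    rw [h1, h2, hnormd d]
    ring
  have key : (inner (𝕜 := ℂ) d (K d)).re + lam * ‖d‖ ^ 2 ≤ 2 * ε := by
    have : f ytil - f ystar ≤ ε := by linarith
    rw [expand] at this; linarith
  have hmind := hmin.1 d
  have hd2 : ‖d‖ ^ 2 ≤ 2 * ε / (lamMin + lam) := by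
    rw [le_div_iff₀ hpos]
    nlinarith [hmind]
  -- lamMax ≥ 0
  have hmax0 : 0 ≤ lamMax := by
    have hy := hmax.1 (EuclideanSpace.single (⟨0, hn⟩ : Fin n) (1 : ℂ))
    have hq := hquad (EuclideanSpace.single (⟨0, hn⟩ : Fin n) (1 : ℂ))
    have hns : ‖(EuclideanSpace.single (⟨0, hn⟩ : Fin n) (1 : ℂ))‖ = 1 := by
      simp [EuclideanSpace.norm_single]
    rw [hq, hns] at hy
    have := sq_nonneg ‖adjoint A (EuclideanSpace.single (⟨0, hn⟩ : Fin n) (1 : ℂ))‖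
    nlinarith
  have hfinal : ‖adjoint A d‖ ^ 2 ≤ lamMax * (2 * ε / (lamMin + lam)) := by
    have := hmax.1 d
    rw [hquad d] at this
    exact this.trans (mul_le_mul_of_nonneg_left hd2 hmax0)
  have : adjoint A ytil - adjoint A ystar = adjoint A d := by rw [hddef, map_sub]
  rw [this]
  calc ‖adjoint A d‖ ^ 2 ≤ lamMax * (2 * ε / (lamMin + lam)) := hfinal
    _ = 2 * lamMax / (lamMin + lam) * ε := by ring
end

section
/- Let x* minimize F and assume (F(x*))/2 ≥ λ. Suppose A_η ∈ ℂ^{s×n} and b_η ∈ ℂ^s satisfy, for all x ∈ ℂⁿ, (1−ε)(F(x) + λ) ≤ ‖A_η x − b_η‖₂² + λ‖x‖₂² + λ ≤ (1+ε)(F(x) + λ), where 0 < ε < 1. Then any minimizer x̃ over ℂⁿ of G(x) = ‖A_η x − b_η‖₂² + λ‖x‖₂² satisfies F(x̃) ≤ ((1+2ε)/(1−ε)) F(x*). -/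
open ContinuousLinearMap

/-- **Quality of the solution of a sampled SILR problem (Proposition 5.1).**
Let `H` be a complex Hilbert space, `A : ℂⁿ → H` a continuous linear map,
`b ∈ H`, `λ ≥ 0` (with `A` injective if `λ = 0`), and
`F(x) = ‖Ax − b‖² + λ‖x‖²` with minimizer `x*` satisfying `F(x*)/2 ≥ λ`.
Suppose `A_η ∈ ℂ^{s×n}` and `b_η ∈ ℂˢ` satisfy, for all `x ∈ ℂⁿ` and some
`0 < ε < 1`,
`(1−ε)(F(x)+λ) ≤ ‖A_η x − b_η‖² + λ‖x‖² + λ ≤ (1+ε)(F(x)+λ)`.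
Then any minimizer `x̃` of `G(x) = ‖A_η x − b_η‖² + λ‖x‖²` satisfies
`F(x̃) ≤ ((1+2ε)/(1−ε)) F(x*)`. -/
theorem sampled_silr_quality
    {n s : ℕ} {H : Type*} [NormedAddCommGroup H] [InnerProductSpace ℂ H]
    [CompleteSpace H]
    (A : EuclideanSpace ℂ (Fin n) →L[ℂ] H) (b : H) (lam : ℝ) (hlam : 0 ≤ lam)
    (hreg : 0 < lam ∨ Function.Injective A)
    (Aη : Matrix (Fin s) (Fin n) ℂ) (bη : EuclideanSpace ℂ (Fin s))
    (ε : ℝ) (hε0 : 0 < ε) (hε1 : ε < 1)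
    (xstar : EuclideanSpace ℂ (Fin n))
    (hxstar : ∀ y : EuclideanSpace ℂ (Fin n),
        ‖A xstar - b‖ ^ 2 + lam * ‖xstar‖ ^ 2 ≤ ‖A y - b‖ ^ 2 + lam * ‖y‖ ^ 2)
    (hbig : lam ≤ (‖A xstar - b‖ ^ 2 + lam * ‖xstar‖ ^ 2) / 2)
    (hsandwich : ∀ x : EuclideanSpace ℂ (Fin n),
        (1 - ε) * (‖A x - b‖ ^ 2 + lam * ‖x‖ ^ 2 + lam)
          ≤ ‖Matrix.toEuclideanLin (𝕜 := ℂ) Aη x - bη‖ ^ 2 + lam * ‖x‖ ^ 2 + lam ∧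
        ‖Matrix.toEuclideanLin (𝕜 := ℂ) Aη x - bη‖ ^ 2 + lam * ‖x‖ ^ 2 + lam
          ≤ (1 + ε) * (‖A x - b‖ ^ 2 + lam * ‖x‖ ^ 2 + lam))
    (xtil : EuclideanSpace ℂ (Fin n))
    (hxtil : ∀ y : EuclideanSpace ℂ (Fin n),
        ‖Matrix.toEuclideanLin (𝕜 := ℂ) Aη xtil - bη‖ ^ 2 + lam * ‖xtil‖ ^ 2
          ≤ ‖Matrix.toEuclideanLin (𝕜 := ℂ) Aη y - bη‖ ^ 2 + lam * ‖y‖ ^ 2) :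
    ‖A xtil - b‖ ^ 2 + lam * ‖xtil‖ ^ 2
      ≤ ((1 + 2 * ε) / (1 - ε)) * (‖A xstar - b‖ ^ 2 + lam * ‖xstar‖ ^ 2) := by
  have h1 := (hsandwich xtil).1
  have h2 := (hsandwich xstar).2
  have h3 := hxtil xstar
  have hε : (0:ℝ) < 1 - ε := by linarith
  rw [div_mul_eq_mul_div, le_div_iff₀ hε]
  nlinarith [h1, h2, h3, hbig]
end

section
/- ∫_Ω ‖∇f_η(x) − ∇f_η(x*)‖² dμ(η) ≤ 2 L_sup (f(x) − f(x*)) for every x ∈ ℝⁿ. -/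
open MeasureTheory Set

section Aux

variable {E : Type*} [NormedAddCommGroup E] [InnerProductSpace ℝ E] [CompleteSpace E]

local notation "⟪" x ", " y "⟫" => @inner ℝ _ _ x y

lemma svrg_line_hasDerivAt (g : E → ℝ) (hg : Differentiable ℝ g) (x v : E) (t : ℝ) :
    HasDerivAt (fun s : ℝ => g (x + s • v)) ⟪gradient g (x + t • v), v⟫ t := by
  have hc : HasDerivAt (fun s : ℝ => x + s • v) v t := by
    simpa using ((hasDerivAt_id t).smul_const v).const_add x
  have hgd := (hg (x + t • v)).hasGradientAt.hasFDerivAt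
  have := hgd.comp_hasDerivAt t hc
  simpa [InnerProductSpace.toDual_apply_apply, Function.comp_def] using this

lemma svrg_convex_lower (g : E → ℝ) (hconv : ConvexOn ℝ Set.univ g)
    (hg : Differentiable ℝ g) (x y : E) :
    g x + ⟪gradient g x, y - x⟫ ≤ g y := by
  set φ : ℝ → ℝ := fun t => g (x + t • (y - x)) with hφ
  have hφconv : ConvexOn ℝ Set.univ φ := by
    have h1 : ConvexOn ℝ ((AffineMap.lineMap x y : ℝ →ᵃ[ℝ] E) ⁻¹' Set.univ)
        (g ∘ (AffineMap.lineMap x y : ℝ →ᵃ[ℝ] E)) := hconv.comp_affineMap _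
    have h2 : (g ∘ (AffineMap.lineMap x y : ℝ →ᵃ[ℝ] E)) = φ := by
      funext t
      simp [φ, AffineMap.lineMap_apply, add_comm]
    simpa [h2] using h1
  have hd : HasDerivAt φ ⟪gradient g x, y - x⟫ 0 := by
    have := svrg_line_hasDerivAt g hg x (y - x) 0
    simpa using this
  have hs := hφconv.le_slope_of_hasDerivAt (Set.mem_univ 0) (Set.mem_univ 1) zero_lt_one hd
  have hslope : slope φ 0 1 = φ 1 - φ 0 := by
    simp [slope_def_field]
  have hφ0 : φ 0 = g x := by simp [φ]
  have hφ1 : φ 1 = g y := by simp [φ]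
  rw [hslope, hφ0, hφ1] at hs
  linarith

lemma svrg_descent (g : E → ℝ) (hg : Differentiable ℝ g) (L : NNReal)
    (hL : LipschitzWith L (gradient g)) (x v : E) :
    g (x + v) ≤ g x + ⟪gradient g x, v⟫ + (L : ℝ) / 2 * ‖v‖ ^ 2 := by
  set a : ℝ := ⟪gradient g x, v⟫ with ha
  set c : ℝ := ‖v‖ ^ 2 with hc
  set ψ : ℝ → ℝ := fun t => g x + t * a + (L : ℝ) / 2 * t ^ 2 * c - g (x + t • v) with hψ
  have hder : ∀ t : ℝ, HasDerivAt ψ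
      (a + (L : ℝ) * t * c - ⟪gradient g (x + t • v), v⟫) t := by
    intro t
    have h1 : HasDerivAt (fun t : ℝ => g x + t * a + (L : ℝ) / 2 * t ^ 2 * c)
        (a + (L : ℝ) * t * c) t := by
      have hA : HasDerivAt (fun t : ℝ => g x + t * a) a t := by
        simpa using ((hasDerivAt_id t).mul_const a).const_add (g x)
      have hB : HasDerivAt (fun t : ℝ => (L : ℝ) / 2 * t ^ 2 * c)
          ((L : ℝ) * t * c) t := by
        have := ((hasDerivAt_pow 2 t).const_mul ((L : ℝ) / 2)).mul_const c
        refine this.congr_deriv ?_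
        ring
      exact hA.add hB
    exact h1.sub (svrg_line_hasDerivAt g hg x v t)
  have hmono : MonotoneOn ψ (Set.Icc (0 : ℝ) 1) := by
    apply monotoneOn_of_deriv_nonneg (convex_Icc 0 1)
    · exact fun t _ => (hder t).differentiableAt.continuousAt.continuousWithinAt
    · exact fun t _ => (hder t).differentiableAt.differentiableWithinAt
    · intro t ht
      rw [interior_Icc] at ht
      rw [(hder t).deriv]
      have hb1 : ⟪gradient g (x + t • v) - gradient g x, v⟫
          ≤ ‖gradient g (x + t • v) - gradient g x‖ * ‖v‖ := real_inner_le_norm _ _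
      have hb2 : ‖gradient g (x + t • v) - gradient g x‖ ≤ (L : ℝ) * (t * ‖v‖) := by
        have := hL.dist_le_mul (x + t • v) x
        rw [dist_eq_norm] at this
        simpa [norm_smul, abs_of_pos ht.1, mul_assoc] using this
      have hb3 : ⟪gradient g (x + t • v), v⟫ - a ≤ (L : ℝ) * t * c := by
        have : ⟪gradient g (x + t • v), v⟫ - a
            = ⟪gradient g (x + t • v) - gradient g x, v⟫ := by
          rw [inner_sub_left]
        rw [this]
        calc ⟪gradient g (x + t • v) - gradient g x, v⟫
            ≤ ‖gradient g (x + t • v) - gradient g x‖ * ‖v‖ := hb1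
          _ ≤ (L : ℝ) * (t * ‖v‖) * ‖v‖ := by
              apply mul_le_mul_of_nonneg_right hb2 (norm_nonneg _)
          _ = (L : ℝ) * t * c := by rw [hc]; ring
      linarith
  have h01 := hmono (Set.mem_Icc.2 ⟨le_refl 0, zero_le_one⟩)
    (Set.mem_Icc.2 ⟨zero_le_one, le_refl 1⟩) zero_le_one
  have hψ0 : ψ 0 = 0 := by simp [ψ]
  have hψ1 : ψ 1 = g x + a + (L : ℝ) / 2 * c - g (x + v) := by simp [ψ]
  rw [hψ0, hψ1] at h01
  linarith

lemma svrg_cocoercive (g : E → ℝ) (hconv : ConvexOn ℝ Set.univ g)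
    (hg : Differentiable ℝ g) (L : NNReal) (hL : LipschitzWith L (gradient g)) (x y : E) :
    ‖gradient g x - gradient g y‖ ^ 2
      ≤ 2 * (L : ℝ) * (g x - g y - ⟪gradient g y, x - y⟫) := by
  rcases eq_or_lt_of_le (zero_le : (0 : NNReal) ≤ L) with hL0 | hLpos
  · -- L = 0 : gradient constant
    have hgc : gradient g x = gradient g y := by
      have := hL.dist_le_mul x y
      rw [← hL0] at this
      simpa [dist_le_zero] using this
    simp [hgc, ← hL0]
  have hLR : (0 : ℝ) < (L : ℝ) := by exact_mod_cast hLpos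
  set c : E := gradient g y with hcdef
  set h : E → ℝ := fun z => g z - ⟪c, z⟫ with hhdef
  have hgradh : ∀ z : E, HasGradientAt h (gradient g z - c) z := by
    intro z
    have h1 : HasFDerivAt g (InnerProductSpace.toDual ℝ E (gradient g z)) z :=
      (hg z).hasGradientAt.hasFDerivAt
    have h2 : HasFDerivAt (fun w : E => ⟪c, w⟫)
        ((InnerProductSpace.toDual ℝ E c : E →L[ℝ] ℝ)) z := by
      exact (InnerProductSpace.toDual ℝ E c).hasFDerivAt
    have h3 := h1.sub h2
    have h4 : (InnerProductSpace.toDual ℝ E (gradient g z))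
        - (InnerProductSpace.toDual ℝ E c)
        = InnerProductSpace.toDual ℝ E (gradient g z - c) := by
      rw [map_sub]
    rw [h4] at h3
    exact hasGradientAt_iff_hasFDerivAt.2 h3
  have hhdiff : Differentiable ℝ h := fun z => (hgradh z).differentiableAt
  have hgradh' : gradient h = fun z => gradient g z - c :=
    funext fun z => (hgradh z).gradient
  have hhLip : LipschitzWith L (gradient h) := by
    rw [hgradh']
    exact LipschitzWith.of_dist_le_mul fun a b => by
      simpa [dist_eq_norm, sub_sub_sub_cancel_right] using hL.dist_le_mul a b
  -- h z ≥ h y for all z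
  have hmin : ∀ z : E, h y ≤ h z := by
    intro z
    have := svrg_convex_lower g hconv hg y z
    have hinner : ⟪c, z⟫ - ⟪c, y⟫ = ⟪c, z - y⟫ := by rw [inner_sub_right]
    simp only [hhdef]
    have : g y + ⟪gradient g y, z - y⟫ ≤ g z := this
    rw [← hcdef] at this
    linarith [hinner ▸ this, (inner_sub_right c z y : ⟪c, z - y⟫ = ⟪c, z⟫ - ⟪c, y⟫)]
  set d : E := gradient g x - c with hddef
  have hdesc := svrg_descent h hhdiff L hhLip x (-((L : ℝ)⁻¹ • d))
  rw [hgradh'] at hdesc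
  have hnorm : ‖-((L : ℝ)⁻¹ • d)‖ ^ 2 = (L : ℝ)⁻¹ ^ 2 * ‖d‖ ^ 2 := by
    rw [norm_neg, norm_smul]
    simp [abs_of_pos (inv_pos.2 hLR), mul_pow]
  have hinner2 : ⟪d, -((L : ℝ)⁻¹ • d)⟫ = -((L : ℝ)⁻¹ * ‖d‖ ^ 2) := by
    rw [inner_neg_right, real_inner_smul_right, real_inner_self_eq_norm_sq]
  rw [hnorm, hinner2] at hdesc
  have hkey : h y ≤ h x - (L : ℝ)⁻¹ / 2 * ‖d‖ ^ 2 := by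
    have h5 := hmin (x + -((L : ℝ)⁻¹ • d))
    have : (L : ℝ) / 2 * ((L : ℝ)⁻¹ ^ 2 * ‖d‖ ^ 2) = (L : ℝ)⁻¹ / 2 * ‖d‖ ^ 2 := by
      field_simp
    calc h y ≤ h (x + -((L : ℝ)⁻¹ • d)) := h5
      _ ≤ h x + -((L : ℝ)⁻¹ * ‖d‖ ^ 2) + (L : ℝ) / 2 * ((L : ℝ)⁻¹ ^ 2 * ‖d‖ ^ 2) := hdesc
      _ = h x - (L : ℝ)⁻¹ * ‖d‖ ^ 2 + (L : ℝ)⁻¹ / 2 * ‖d‖ ^ 2 := by rw [this]; ring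
      _ ≤ h x - (L : ℝ)⁻¹ / 2 * ‖d‖ ^ 2 := by
          have h6 : (0:ℝ) ≤ (L : ℝ)⁻¹ / 2 * ‖d‖ ^ 2 := by positivity
          nlinarith [sq_nonneg ‖d‖, inv_pos.2 hLR]
  have hhx : h x - h y = g x - g y - ⟪c, x - y⟫ := by
    simp only [hhdef]
    rw [inner_sub_right]
    ring
  have : (L : ℝ)⁻¹ / 2 * ‖d‖ ^ 2 ≤ h x - h y := by linarith
  rw [hhx] at this
  have hfinal : ‖d‖ ^ 2 ≤ 2 * (L : ℝ) * (g x - g y - ⟪c, x - y⟫) := by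
    have h7 := mul_le_mul_of_nonneg_left this (le_of_lt (by positivity : (0:ℝ) < 2 * (L : ℝ)))
    calc ‖d‖ ^ 2 = 2 * (L : ℝ) * ((L : ℝ)⁻¹ / 2 * ‖d‖ ^ 2) := by
          field_simp
      _ ≤ 2 * (L : ℝ) * (g x - g y - ⟪c, x - y⟫) := h7
  exact hfinal

end Aux

/-- **Variance bound for stochastic gradients at the optimum (Lemma A.2).**
Let `(Ω, μ)` be a probability space and, for each `η ∈ Ω`, let
`f_η : ℝⁿ → ℝ` be convex and differentiable with `∇f_η` Lipschitz with
constant `L_η ≤ L_sup < ∞`.  Let `f(x) = ∫ f_η(x) dμ(η)` with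
`∇f(x) = ∫ ∇f_η(x) dμ(η)`, and let `x*` be a global minimizer of `f`.  Then
for every `x`, `∫ ‖∇f_η(x) − ∇f_η(x*)‖² dμ(η) ≤ 2 L_sup (f(x) − f(x*))`. -/
theorem svrg_gradient_variance_bound
    {Ω : Type*} [MeasurableSpace Ω] (μ : Measure Ω) [IsProbabilityMeasure μ]
    {n : ℕ} (f : Ω → EuclideanSpace ℝ (Fin n) → ℝ)
    (hconv : ∀ η, ConvexOn ℝ Set.univ (f η))
    (hdiff : ∀ η, Differentiable ℝ (f η))
    (L : Ω → NNReal) (hLip : ∀ η, LipschitzWith (L η) (gradient (f η)))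
    (Lsup : NNReal) (hLsup : ∀ η, L η ≤ Lsup)
    (hfint : ∀ x, Integrable (fun η => f η x) μ)
    (hgint : ∀ x, Integrable (fun η => gradient (f η) x) μ)
    (F : EuclideanSpace ℝ (Fin n) → ℝ) (hF : ∀ x, F x = ∫ η, f η x ∂μ)
    (hgrad : ∀ x, gradient F x = ∫ η, gradient (f η) x ∂μ)
    (xstar : EuclideanSpace ℝ (Fin n)) (hxstar : ∀ y, F xstar ≤ F y) :
    ∀ x : EuclideanSpace ℝ (Fin n),
      ∫ η, ‖gradient (f η) x - gradient (f η) xstar‖ ^ 2 ∂μ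
        ≤ 2 * (Lsup : ℝ) * (F x - F xstar) := by
  intro x
  -- gradient of F vanishes at xstar
  have hgradF : gradient F xstar = 0 := by
    by_cases hd : DifferentiableAt ℝ F xstar
    · have hloc : IsLocalMin F xstar := Filter.Eventually.of_forall hxstar
      rw [gradient, hloc.fderiv_eq_zero, map_zero]
    · exact gradient_eq_zero_of_not_differentiableAt hd
  -- pointwise bound
  have hLipSup : ∀ η, LipschitzWith Lsup (gradient (f η)) :=
    fun η => (hLip η).weaken (hLsup η)
  have hkey : ∀ η, ‖gradient (f η) x - gradient (f η) xstar‖ ^ 2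
      ≤ 2 * (Lsup : ℝ) * (f η x - f η xstar
        - @inner ℝ _ _ (gradient (f η) xstar) (x - xstar)) :=
    fun η => svrg_cocoercive (f η) (hconv η) (hdiff η) Lsup (hLipSup η) x xstar
  -- integrability of both sides
  have hasm : AEStronglyMeasurable
      (fun η => ‖gradient (f η) x - gradient (f η) xstar‖ ^ 2) μ := by
    exact (((hgint x).aestronglyMeasurable.sub
      (hgint xstar).aestronglyMeasurable).norm.pow 2)
  have hbdd : ∀ η, ‖gradient (f η) x - gradient (f η) xstar‖ ^ 2
      ≤ ((Lsup : ℝ) * ‖x - xstar‖) ^ 2 := by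
    intro η
    have := (hLipSup η).dist_le_mul x xstar
    rw [dist_eq_norm, dist_eq_norm] at this
    exact pow_le_pow_left₀ (norm_nonneg _) this 2
  have hint1 : Integrable (fun η => ‖gradient (f η) x - gradient (f η) xstar‖ ^ 2) μ := by
    apply Integrable.mono' (integrable_const (((Lsup : ℝ) * ‖x - xstar‖) ^ 2)) hasm
    exact Filter.Eventually.of_forall fun η => by
      rw [Real.norm_eq_abs, abs_of_nonneg (by positivity)]
      exact hbdd η
  have hint_inner : Integrable
      (fun η => @inner ℝ _ _ (gradient (f η) xstar) (x - xstar)) μ := by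
    exact (hgint xstar).inner_const (x - xstar)
  have hint2 : Integrable (fun η => 2 * (Lsup : ℝ) * (f η x - f η xstar
      - @inner ℝ _ _ (gradient (f η) xstar) (x - xstar))) μ := by
    have hsub : Integrable (fun η => f η x - f η xstar) μ := (hfint x).sub (hfint xstar)
    exact (hsub.sub hint_inner).const_mul _
  -- integrate the pointwise bound
  have hmono := integral_mono hint1 hint2 hkey
  have hinner_int : ∫ η, @inner ℝ _ _ (gradient (f η) xstar) (x - xstar) ∂μ
      = @inner ℝ _ _ (gradient F xstar) (x - xstar) := by
    rw [hgrad]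
    have : ∀ η, @inner ℝ _ _ (gradient (f η) xstar) (x - xstar)
        = @inner ℝ _ _ (x - xstar) (gradient (f η) xstar) :=
      fun η => real_inner_comm _ _
    simp_rw [this]
    rw [integral_inner (hgint xstar)]
    exact real_inner_comm _ _
  have hrhs : ∫ η, 2 * (Lsup : ℝ) * (f η x - f η xstar
      - @inner ℝ _ _ (gradient (f η) xstar) (x - xstar)) ∂μ
      = 2 * (Lsup : ℝ) * (F x - F xstar) := by
    have hsub : Integrable (fun η => f η x - f η xstar) μ := (hfint x).sub (hfint xstar)
    rw [integral_const_mul, integral_sub hsub hint_inner,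
      integral_sub (hfint x) (hfint xstar), hinner_int, hgradF]
    simp [hF]
  rw [hrhs] at hmono
  exact hmono
end
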